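/- For n ≥ 2, g(K_3, K_n) ≤ 2(n-1). -/

import Mathlib

open Finset

/-- Edge set of the complete bipartite graph with parts `A` and `B`. -/
def bicliqueEdges {V : Type*} (A B : Finset V) : Set (Sym2 V) :=
  {e | ∃ a ∈ A, ∃ b ∈ B, e = s(a, b)}

/-- `f_2(G)`: minimum number of complete bipartite subgraphs needed to partition
the edge set of the graph `G`. -/
noncomputable def f2 {V : Type*} (G : SimpleGraph V) : ℕ :=
  sInf {m | ∃ A B : Fin m → Finset V,
    (∀ k, Disjoint (A k) (B k)) ∧
    (∀ k, bicliqueEdges (A k) (B k) ⊆ G.edgeSet) ∧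
    ∀ e ∈ G.edgeSet, ∃! k, e ∈ bicliqueEdges (A k) (B k)}

/-- Edge set of the complete `r`-partite `r`-uniform hypergraph with parts `P`. -/
def crossEdges {V : Type*} [DecidableEq V] {r : ℕ} (P : Fin r → Finset V) : Set (Finset V) :=
  {e | ∃ f : Fin r → V, (∀ i, f i ∈ P i) ∧ e = Finset.image f Finset.univ}

/-- `f_r(n)`: minimum number of complete `r`-partite `r`-uniform hypergraphs needed to
partition the edge set of the complete `r`-uniform hypergraph on `n` vertices. -/
noncomputable def fr (r n : ℕ) : ℕ :=
  sInf {m | ∃ P : Fin m → Fin r → Finset (Fin n),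
    (∀ k, Pairwise (Function.onFun Disjoint (P k))) ∧
    ∀ e : Finset (Fin n), e.card = r → ∃! k, e ∈ crossEdges (P k)}

/-- `g(G,H)`: minimum number of blocks (products of edge sets of complete
bipartite subgraphs of `G` and `H` respectively) needed to partition `E(G) × E(H)`. -/
noncomputable def gGH {V W : Type*} (G : SimpleGraph V) (H : SimpleGraph W) : ℕ :=
  sInf {m | ∃ A B : Fin m → Finset V, ∃ C D : Fin m → Finset W,
    (∀ k, Disjoint (A k) (B k)) ∧ (∀ k, Disjoint (C k) (D k)) ∧
    (∀ k, bicliqueEdges (A k) (B k) ⊆ G.edgeSet) ∧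
    (∀ k, bicliqueEdges (C k) (D k) ⊆ H.edgeSet) ∧
    ∀ p : Sym2 V × Sym2 W, p.1 ∈ G.edgeSet → p.2 ∈ H.edgeSet →
      ∃! k, p.1 ∈ bicliqueEdges (A k) (B k) ∧ p.2 ∈ bicliqueEdges (C k) (D k)}

/-- `g(n) = g(K_n, K_n)`. -/
noncomputable def gn (n : ℕ) : ℕ :=
  gGH (SimpleGraph.completeGraph (Fin n)) (SimpleGraph.completeGraph (Fin n))


lemma biclique_mem {V : Type*} {A B : Finset V} {x y : V} :
    s(x, y) ∈ bicliqueEdges A B ↔ (x ∈ A ∧ y ∈ B) ∨ (y ∈ A ∧ x ∈ B) := by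
  constructor
  · rintro ⟨a, ha, b, hb, h⟩
    rcases Sym2.eq_iff.1 h with ⟨rfl, rfl⟩ | ⟨rfl, rfl⟩
    · exact Or.inl ⟨ha, hb⟩
    · exact Or.inr ⟨ha, hb⟩
  · rintro (⟨h1, h2⟩ | ⟨h1, h2⟩)
    · exact ⟨x, h1, y, h2, rfl⟩
    · exact ⟨y, h1, x, h2, Sym2.eq_swap.symm⟩

lemma biclique_subset_complete {V : Type*} {A B : Finset V} (h : Disjoint A B) :
    bicliqueEdges A B ⊆ (SimpleGraph.completeGraph V).edgeSet := by
  rintro e ⟨a, ha, b, hb, rfl⟩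
  rw [SimpleGraph.mem_edgeSet]
  intro hab
  exact (Finset.disjoint_left.1 h ha) (hab ▸ hb)

lemma star_mem {n : ℕ} {x y : Fin n} (hxy : x ≠ y) (c : Fin n) :
    s(x, y) ∈ bicliqueEdges {c} (univ.filter (fun j : Fin n => c.val < j.val)) ↔
      c.val = min x.val y.val := by
  have hne : x.val ≠ y.val := fun h => hxy (Fin.ext h)
  rw [biclique_mem]
  simp only [Finset.mem_singleton, Finset.mem_filter, Finset.mem_univ, true_and]
  constructor
  · rintro (⟨rfl, h⟩ | ⟨rfl, h⟩) <;> omega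
  · intro h
    rcases Nat.lt_or_ge x.val y.val with h' | h'
    · exact Or.inl ⟨Fin.ext (by omega), by omega⟩
    · exact Or.inr ⟨Fin.ext (by omega), by omega⟩

theorem stmt9 (n : ℕ) (hn : 2 ≤ n) :
    gGH (SimpleGraph.completeGraph (Fin 3)) (SimpleGraph.completeGraph (Fin n)) ≤ 2 * (n - 1) := by
  set m := n - 1 with hmdef
  have hm1 : 1 ≤ m := by omega
  have hmn : m < n := by omega
  apply Nat.sInf_le
  refine ⟨fun k => if k.val < m then ({0} : Finset (Fin 3)) else {1},
          fun k => if k.val < m then ({1, 2} : Finset (Fin 3)) else {2},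
          fun k => {(⟨k.val % m, lt_trans (Nat.mod_lt _ hm1) hmn⟩ : Fin n)},
          fun k => univ.filter (fun j : Fin n => k.val % m < j.val),
          fun k => ?_, fun k => ?_, fun k => ?_, fun k => ?_, ?_⟩
  · dsimp only; split <;> decide
  · simp only [Finset.disjoint_singleton_left, Finset.mem_filter]
    omega
  · apply biclique_subset_complete
    dsimp only; split <;> decide
  · apply biclique_subset_complete
    simp only [Finset.disjoint_singleton_left, Finset.mem_filter]
    omega
  · rintro ⟨e1, e2⟩ he1 he2
    induction e1 using Sym2.ind with | _ x1 y1 =>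
    induction e2 using Sym2.ind with | _ x2 y2 =>
    rw [SimpleGraph.mem_edgeSet] at he1 he2
    have hxy1 : x1 ≠ y1 := he1
    have hxy2 : x2 ≠ y2 := he2
    -- exactly one of the two K3 blocks contains s(x1,y1)
    have hK3 : ∀ x y : Fin 3, x ≠ y →
        (s(x, y) ∈ bicliqueEdges ({0} : Finset (Fin 3)) {1, 2} ∧
          s(x, y) ∉ bicliqueEdges ({1} : Finset (Fin 3)) {2}) ∨
        (s(x, y) ∈ bicliqueEdges ({1} : Finset (Fin 3)) {2} ∧
          s(x, y) ∉ bicliqueEdges ({0} : Finset (Fin 3)) {1, 2}) := by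
      simp only [bicliqueEdges, Set.mem_setOf_eq]
      decide
    set i : ℕ := min x2.val y2.val with hidef
    have hi : i < m := by
      have := x2.isLt; have := y2.isLt
      have : x2.val ≠ y2.val := fun h => hxy2 (Fin.ext h)
      omega
    rcases hK3 x1 y1 hxy1 with ⟨hP, hnQ⟩ | ⟨hQ, hnP⟩
    · refine ⟨⟨i, by omega⟩, ?_, ?_⟩
      · constructor
        · simpa only [if_pos hi] using hP
        · rw [star_mem hxy2]
          simp [Nat.mod_eq_of_lt hi]
          exact hidef
      · rintro k ⟨hk1, hk2⟩
        rw [star_mem hxy2] at hk2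
        simp only at hk2
        have hklt : k.val < m := by
          by_contra hge
          dsimp only at hk1
          simp only [if_neg hge] at hk1
          exact hnQ hk1
        have : k.val % m = k.val := Nat.mod_eq_of_lt hklt
        apply Fin.ext
        simp only
        omega
    · refine ⟨⟨i + m, by omega⟩, ?_, ?_⟩
      · constructor
        · have : ¬ (i + m < m) := by omega
          simpa only [if_neg this] using hQ
        · rw [star_mem hxy2]
          simp [Nat.add_mod_right, Nat.mod_eq_of_lt hi]
          exact hidef
      · rintro k ⟨hk1, hk2⟩
        rw [star_mem hxy2] at hk2
        simp only at hk2
        have hkge : ¬ k.val < m := by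
          intro hlt
          dsimp only at hk1
          simp only [if_pos hlt] at hk1
          exact hnP hk1
        have hk2m : k.val < 2 * m := k.isLt
        have : k.val % m = k.val - m := by
          rw [Nat.mod_eq_sub_mod (by omega), Nat.mod_eq_of_lt (by omega)]
        apply Fin.ext
        simp only
        omega
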